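/- arXiv:1801.09028 — 4 statements merged into one kernel-verified Lean document; each statement's English description precedes it below -/
import Mathlib

section
/- Let n be a positive integer and w : {-1,1}^n → [0,∞) a weight function with nonempty support. For all real λ > 0 and γ > 0 with λγ ≥ 1, writing w^γ for the weight function x ↦ w(x)^γ (whose support equals that of w), one has R(w^γ) ≤ (1/λ)·log₂ Z(w) + ((λγ − 1)/λ)·log₂ w_max + λn/2. -/
open Finset

/-- Map a boolean to the corresponding element of `{-1, 1} ⊆ ℝ`. -/
noncomputable def sgn (b : Bool) : ℝ := if b then 1 else -1

/-- Standard inner product on `ℝ^ι` restricted to the cube `{-1,1}^ι`. -/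
noncomputable def ip {ι : Type*} [Fintype ι] [DecidableEq ι] (c x : ι → Bool) : ℝ :=
  ∑ i, sgn (c i) * sgn (x i)

/-- `δ(c, w)`: the maximum over the support of `w` of `⟨c,x⟩ + log₂ w(x)`. -/
noncomputable def wdelta {ι : Type*} [Fintype ι] [DecidableEq ι] (c : ι → Bool) (w : (ι → Bool) → ℝ) : ℝ :=
  sSup {y : ℝ | ∃ x, 0 < w x ∧ y = ip c x + Real.logb 2 (w x)}

/-- The weighted Rademacher complexity `R(w) = E_c[δ(c,w)]`, `c` uniform on the cube. -/
noncomputable def wRad {ι : Type*} [Fintype ι] [DecidableEq ι] (w : (ι → Bool) → ℝ) : ℝ :=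
  (∑ c : ι → Bool, wdelta c w) / 2 ^ (Fintype.card ι)

/-- `Z(w)`: the total weight. -/
noncomputable def Zw {ι : Type*} [Fintype ι] [DecidableEq ι] (w : (ι → Bool) → ℝ) : ℝ := ∑ x, w x

/-- `w_min`: the smallest positive weight. -/
noncomputable def wmin {ι : Type*} [Fintype ι] [DecidableEq ι] (w : (ι → Bool) → ℝ) : ℝ :=
  sInf {y : ℝ | ∃ x, 0 < w x ∧ y = w x}

/-- `w_max`: the largest weight. -/
noncomputable def wmax {ι : Type*} [Fintype ι] [DecidableEq ι] (w : (ι → Bool) → ℝ) : ℝ :=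
  sSup {y : ℝ | ∃ x, y = w x}

lemma cosh_bound (t : ℝ) : (2:ℝ) ^ t + (2:ℝ) ^ (-t) ≤ 2 * (2:ℝ) ^ (t^2/2) := by
  have h2 : (0:ℝ) < 2 := two_pos
  rw [Real.rpow_def_of_pos h2, Real.rpow_def_of_pos h2, Real.rpow_def_of_pos h2]
  have hc := Real.cosh_le_exp_half_sq (Real.log 2 * t)
  rw [Real.cosh_eq] at hc
  have hl1 : Real.log 2 ≤ 1 := by
    have := Real.log_le_sub_one_of_pos h2; linarith
  have hl0 : 0 ≤ Real.log 2 := Real.log_nonneg one_le_two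
  have hmono : Real.exp ((Real.log 2 * t)^2/2) ≤ Real.exp (Real.log 2 * (t^2/2)) := by
    apply Real.exp_le_exp.mpr
    nlinarith [mul_nonneg (mul_nonneg hl0 (by linarith : (0:ℝ) ≤ 1 - Real.log 2)) (sq_nonneg t)]
  have hneg : Real.log 2 * -t = -(Real.log 2 * t) := by ring
  rw [hneg]
  linarith

lemma sum_factor (n : ℕ) (lam : ℝ) (x : Fin n → Bool) :
    ∑ c : Fin n → Bool, (2:ℝ) ^ (lam * ip c x) ≤ 2^n * (2:ℝ)^(lam^2*n/2) := by
  have h2 : (0:ℝ) < 2 := two_pos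
  have hexp : ∀ c : Fin n → Bool, (2:ℝ) ^ (lam * ip c x)
      = ∏ i, (2:ℝ) ^ (lam * (sgn (c i) * sgn (x i))) := by
    intro c
    simp only [Real.rpow_def_of_pos h2, ← Real.exp_sum]
    congr 1
    rw [ip, Finset.mul_sum, Finset.mul_sum]
  have hswap : (∏ i, ∑ b : Bool, (2:ℝ) ^ (lam * (sgn b * sgn (x i))))
      = ∑ c : Fin n → Bool, ∏ i, (2:ℝ) ^ (lam * (sgn (c i) * sgn (x i))) := by
    rw [Finset.prod_univ_sum, Fintype.piFinset_univ]
  have hfac : ∀ i, (∑ b : Bool, (2:ℝ) ^ (lam * (sgn b * sgn (x i)))) ≤ 2 * (2:ℝ)^(lam^2/2) := by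
    intro i
    have hb := cosh_bound lam
    rcases Bool.dichotomy (x i) with h | h <;>
      · simp only [Fintype.sum_bool, sgn, h]
        norm_num
        linarith
  calc ∑ c : Fin n → Bool, (2:ℝ) ^ (lam * ip c x)
      = ∏ i, ∑ b : Bool, (2:ℝ) ^ (lam * (sgn b * sgn (x i))) := by
        rw [hswap]; exact Finset.sum_congr rfl fun c _ => hexp c
    _ ≤ ∏ _i : Fin n, (2 * (2:ℝ)^(lam^2/2)) := by
        apply Finset.prod_le_prod
        · intro i _
          exact Finset.sum_nonneg fun b _ => Real.rpow_nonneg (by norm_num) _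
        · intro i _; exact hfac i
    _ = 2^n * (2:ℝ)^(lam^2*n/2) := by
        rw [Finset.prod_const, Finset.card_univ, Fintype.card_fin, mul_pow,
          ← Real.rpow_natCast ((2:ℝ)^(lam^2/2)) n, ← Real.rpow_mul (le_of_lt h2)]
        congr 1
        ring_nf

theorem stmt3 (n : ℕ) (hn : 0 < n) (w : (Fin n → Bool) → ℝ)
    (hw : ∀ x, 0 ≤ w x) (hsupp : ∃ x, 0 < w x)
    (lam gam : ℝ) (hlam : 0 < lam) (hgam : 0 < gam) (hlg : 1 ≤ lam * gam) :
    wRad (fun x => w x ^ gam) ≤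
      (1 / lam) * Real.logb 2 (Zw w) + ((lam * gam - 1) / lam) * Real.logb 2 (wmax w)
        + lam * n / 2 := by
  classical
  obtain ⟨x0, hx0⟩ := hsupp
  have h2 : (0:ℝ) < 2 := two_pos
  have h12 : (1:ℝ) < 2 := one_lt_two
  set T : (Fin n → Bool) → ℝ := fun c => ∑ x, w x * (2:ℝ) ^ (lam * ip c x) with hT
  set N : ℝ := (2:ℝ)^n with hNdef
  have hNpos : 0 < N := by positivity
  set M : ℝ := Real.logb 2 (wmax w) with hM
  have hTpos : ∀ c, 0 < T c := by
    intro c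
    apply Finset.sum_pos' (fun y _ => mul_nonneg (hw y) (Real.rpow_nonneg h2.le _))
    exact ⟨x0, Finset.mem_univ _, mul_pos hx0 (Real.rpow_pos_of_pos h2 _)⟩
  have hZpos : 0 < Zw w :=
    Finset.sum_pos' (fun y _ => hw y) ⟨x0, Finset.mem_univ _, hx0⟩
  have hbdd : BddAbove {y : ℝ | ∃ x, y = w x} := by
    have : {y : ℝ | ∃ x, y = w x} = Set.range w := by
      ext y; simp [eq_comm]
    rw [this]; exact (Set.finite_range w).bddAbove
  have hmax : ∀ x, w x ≤ wmax w := fun x => le_csSup hbdd ⟨x, rfl⟩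
  have hmaxpos : 0 < wmax w := lt_of_lt_of_le hx0 (hmax x0)
  have hcard : (Finset.univ : Finset (Fin n → Bool)).card = 2^n := by simp
  -- per-c bound on wdelta
  have hdelta : ∀ c, wdelta c (fun x => w x ^ gam)
      ≤ ((lam * gam - 1) * M + Real.logb 2 (T c)) / lam := by
    intro c
    apply csSup_le
    · exact ⟨ip c x0 + Real.logb 2 (w x0 ^ gam), x0, Real.rpow_pos_of_pos hx0 _, rfl⟩
    rintro y ⟨x, hxg, rfl⟩
    have hwx : 0 < w x := by
      rcases (hw x).lt_or_eq with h | h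
      · exact h
      · exfalso
        have hxg' : 0 < w x ^ gam := hxg
        rw [← h, Real.zero_rpow hgam.ne'] at hxg'
        exact lt_irrefl 0 hxg'
    rw [Real.logb_rpow_eq_mul_logb_of_pos hwx, le_div_iff₀ hlam]
    have hip : w x * (2:ℝ) ^ (lam * ip c x) ≤ T c := by
      rw [hT]
      exact Finset.single_le_sum (f := fun y => w y * (2:ℝ) ^ (lam * ip c y))
        (fun y _ => mul_nonneg (hw y) (Real.rpow_nonneg h2.le _)) (Finset.mem_univ x)
    have h1 : lam * ip c x + Real.logb 2 (w x)
        = Real.logb 2 (w x * (2:ℝ) ^ (lam * ip c x)) := by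
      rw [Real.logb_mul hwx.ne' (Real.rpow_pos_of_pos h2 _).ne',
        Real.logb_rpow h2 (by norm_num)]
      ring
    have h3 : Real.logb 2 (w x * (2:ℝ) ^ (lam * ip c x)) ≤ Real.logb 2 (T c) :=
      Real.logb_le_logb_of_le h12 (mul_pos hwx (Real.rpow_pos_of_pos h2 _)) hip
    have h4 : Real.logb 2 (w x) ≤ M :=
      Real.logb_le_logb_of_le h12 hwx (hmax x)
    have h5 : (lam * gam - 1) * Real.logb 2 (w x) ≤ (lam * gam - 1) * M :=
      mul_le_mul_of_nonneg_left h4 (by linarith)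
    have hexpand : (ip c x + gam * Real.logb 2 (w x)) * lam
        = lam * ip c x + Real.logb 2 (w x) + (lam * gam - 1) * Real.logb 2 (w x) := by ring
    linarith
  -- Jensen for log
  have hweight : ∑ _c : Fin n → Bool, N⁻¹ = 1 := by
    rw [Finset.sum_const, hcard, nsmul_eq_mul]
    push_cast
    rw [mul_inv_cancel₀ hNpos.ne']
  have hJ : (∑ c, Real.log (T c)) / N ≤ Real.log ((∑ c, T c) / N) := by
    have hj := (strictConcaveOn_log_Ioi.concaveOn).le_map_sum
      (fun (_ : Fin n → Bool) _ => inv_nonneg.mpr hNpos.le) hweight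
      (fun c _ => Set.mem_Ioi.mpr (hTpos c))
    simp only [smul_eq_mul] at hj
    rw [← Finset.mul_sum, ← Finset.mul_sum, inv_mul_eq_div, inv_mul_eq_div] at hj
    exact hj
  have hsumTpos : 0 < ∑ c, T c :=
    Finset.sum_pos (fun c _ => hTpos c) Finset.univ_nonempty
  have hJb : (∑ c, Real.logb 2 (T c)) / N ≤ Real.logb 2 ((∑ c, T c) / N) := by
    have hlog2 : 0 < Real.log 2 := Real.log_pos h12
    have heq : (∑ c, Real.logb 2 (T c)) / N
        = ((∑ c, Real.log (T c)) / N) / Real.log 2 := by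
      simp only [Real.logb]
      rw [← Finset.sum_div, div_right_comm]
    rw [heq, Real.logb]
    gcongr
  -- average of T bound
  have havg : (∑ c, T c) / N ≤ Zw w * (2:ℝ)^(lam^2*n/2) := by
    have hswap : ∑ c : Fin n → Bool, T c
        = ∑ x : Fin n → Bool, w x * ∑ c : Fin n → Bool, (2:ℝ)^(lam * ip c x) := by
      rw [hT, Finset.sum_comm]
      simp [Finset.mul_sum]
    rw [hswap, div_le_iff₀ hNpos]
    calc ∑ x : Fin n → Bool, w x * ∑ c : Fin n → Bool, (2:ℝ)^(lam * ip c x)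
        ≤ ∑ x : Fin n → Bool, w x * (2^n * (2:ℝ)^(lam^2*n/2)) :=
          Finset.sum_le_sum fun x _ =>
            mul_le_mul_of_nonneg_left (sum_factor n lam x) (hw x)
      _ = Zw w * (2:ℝ)^(lam^2*n/2) * N := by
          rw [← Finset.sum_mul, Zw, hNdef]; ring
  have hlogavg : Real.logb 2 ((∑ c, T c) / N) ≤ Real.logb 2 (Zw w) + lam^2*n/2 := by
    have h := Real.logb_le_logb_of_le h12 (div_pos hsumTpos hNpos) havg
    rwa [Real.logb_mul hZpos.ne' (Real.rpow_pos_of_pos h2 _).ne',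
      Real.logb_rpow h2 (by norm_num)] at h
  -- assemble
  set S : ℝ := ∑ c, Real.logb 2 (T c) with hS
  have hsum : ∑ c : Fin n → Bool, wdelta c (fun x => w x ^ gam)
      ≤ ∑ c : Fin n → Bool, (((lam * gam - 1) * M + Real.logb 2 (T c)) / lam) :=
    Finset.sum_le_sum fun c _ => hdelta c
  have hsum2 : ∑ c : Fin n → Bool, (((lam * gam - 1) * M + Real.logb 2 (T c)) / lam)
      = (N * ((lam * gam - 1) * M) + S) / lam := by
    rw [← Finset.sum_div, Finset.sum_add_distrib, Finset.sum_const, hcard, nsmul_eq_mul]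
    push_cast
    rw [hS, hNdef]
  have hwr : wRad (fun x => w x ^ gam)
      = (∑ c : Fin n → Bool, wdelta c (fun x => w x ^ gam)) / N := by
    rw [wRad, Fintype.card_fin, hNdef]
  rw [hwr]
  have step1 : (∑ c : Fin n → Bool, wdelta c (fun x => w x ^ gam)) / N
      ≤ ((N * ((lam * gam - 1) * M) + S) / lam) / N := by
    rw [← hsum2]; gcongr
  have step2 : ((N * ((lam * gam - 1) * M) + S) / lam) / N
      = ((lam * gam - 1) * M) / lam + (S / N) / lam := by
    field_simp
  have step3 : (S / N) / lam ≤ (Real.logb 2 (Zw w) + lam^2*n/2) / lam := by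
    gcongr
    exact le_trans hJb hlogavg
  have step4 : ((lam * gam - 1) * M) / lam + (Real.logb 2 (Zw w) + lam^2*n/2) / lam
      = (1 / lam) * Real.logb 2 (Zw w) + ((lam * gam - 1) / lam) * M + lam * n / 2 := by
    field_simp
    ring
  linarith [step1, step2 ▸ step1, step3]
end

section
/- Let n be a positive integer and w : {-1,1}^n → [0,∞) a weight function with nonempty support. For c sampled uniformly from {-1,1}^n, the two-sided bound R(w) − √(6n) ≤ δ(c,w) ≤ R(w) + √(6n) holds with probability at least 1 − 2·exp(−3) (which exceeds 0.90). -/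
open Finset

-- wdelta as a finite max
lemma wdelta_eq {n : ℕ} (c : Fin n → Bool) (w : (Fin n → Bool) → ℝ) (hsupp : ∃ x, 0 < w x) :
    wdelta c w = ((univ.filter fun x => 0 < w x).image
      (fun x => ip c x + Real.logb 2 (w x))).max'
      (by obtain ⟨x, hx⟩ := hsupp; exact ⟨_, mem_image_of_mem _ (by simpa using hx)⟩) := by
  rw [← Finset.Nonempty.csSup_eq_max']
  unfold wdelta
  congr 1
  ext y
  simp only [Set.mem_setOf_eq, coe_image, Set.mem_image, mem_coe, mem_filter, mem_univ, true_and]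
  constructor
  · rintro ⟨x, hx, rfl⟩; exact ⟨x, hx, rfl⟩
  · rintro ⟨x, hx, rfl⟩; exact ⟨x, hx, rfl⟩

lemma ip_update_abs {n : ℕ} (c x : Fin n → Bool) (i : Fin n) (b : Bool) :
    |ip c x - ip (Function.update c i b) x| ≤ 2 := by
  have : ip c x - ip (Function.update c i b) x
      = (sgn (c i) - sgn b) * sgn (x i) := by
    unfold ip
    rw [← Finset.sum_sub_distrib]
    rw [Finset.sum_eq_single i]
    · rw [Function.update_self]; ring
    · intro j _ hj
      rw [Function.update_of_ne hj]; ring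
    · intro h; exact absurd (mem_univ i) h
  rw [this]
  cases hc : c i <;> cases b <;> cases hx : x i <;> simp [sgn] <;> norm_num

lemma wdelta_update_abs {n : ℕ} (c : Fin n → Bool) (w : (Fin n → Bool) → ℝ)
    (hsupp : ∃ x, 0 < w x) (i : Fin n) (b : Bool) :
    |wdelta c w - wdelta (Function.update c i b) w| ≤ 2 := by
  set c' := Function.update c i b with hc'
  have key : ∀ (a a' : Fin n → Bool), (∀ x, ip a x ≤ ip a' x + 2) →
      wdelta a w ≤ wdelta a' w + 2 := by
    intro a a' h
    rw [wdelta_eq a w hsupp, wdelta_eq a' w hsupp]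
    apply Finset.max'_le
    intro y hy
    simp only [mem_image, mem_filter, mem_univ, true_and] at hy
    obtain ⟨x, hx, rfl⟩ := hy
    have h2 := Finset.le_max' ((univ.filter fun x => 0 < w x).image
        (fun x => ip a' x + Real.logb 2 (w x)))
      (ip a' x + Real.logb 2 (w x)) (mem_image_of_mem _ (by simpa using hx))
    have := h x
    linarith
  have h1 : wdelta c w ≤ wdelta c' w + 2 := by
    apply key; intro x
    have := ip_update_abs c x i b
    rw [abs_le] at this; linarith
  have h2 : wdelta c' w ≤ wdelta c w + 2 := by
    apply key; intro x
    have hcc : Function.update c' i (c i) = c := by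
      rw [hc', Function.update_idem, Function.update_eq_self]
    have := ip_update_abs c' x i (c i)
    rw [hcc, abs_le] at this; linarith
  rw [abs_le]; constructor <;> linarith

-- sum splitting over the cube
lemma cube_sum_split {n : ℕ} (g : (Fin (n+1) → Bool) → ℝ) :
    ∑ c, g c = (∑ c' : Fin n → Bool, g (Fin.cons true c'))
      + ∑ c' : Fin n → Bool, g (Fin.cons false c') := by
  rw [← Fintype.sum_equiv (Fin.consEquiv fun _ => Bool)
      (fun p => g (Fin.cons p.1 p.2)) g (fun p => rfl),
    Fintype.sum_prod_type, Fintype.sum_bool]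

-- McDiarmid-style MGF bound on the discrete cube
lemma mgf_bound : ∀ (n : ℕ) (f : (Fin n → Bool) → ℝ) (L : ℝ),
    (∀ (c : Fin n → Bool) (i : Fin n) (b : Bool), |f c - f (Function.update c i b)| ≤ 2) →
    ∑ c, Real.exp (L * (f c - (∑ c, f c) / 2 ^ n)) ≤ 2 ^ n * Real.exp (n * L ^ 2 / 2) := by
  intro n
  induction n with
  | zero =>
    intro f L _
    rw [Fintype.sum_unique, Fintype.sum_unique]
    simp
  | succ n ih =>
    intro f L hf
    set gt : (Fin n → Bool) → ℝ := fun c' => f (Fin.cons true c') with hgt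
    set gf : (Fin n → Bool) → ℝ := fun c' => f (Fin.cons false c') with hgf
    have hbt : ∀ (c : Fin n → Bool) (i : Fin n) (b : Bool),
        |gt c - gt (Function.update c i b)| ≤ 2 := by
      intro c i b
      have : Fin.cons (α := fun _ => Bool) true (Function.update c i b)
          = Function.update (Fin.cons true c) i.succ b := Fin.cons_update (α := fun _ => Bool) true c i b
      simpa [hgt, this] using hf (Fin.cons true c) i.succ b
    have hbf : ∀ (c : Fin n → Bool) (i : Fin n) (b : Bool),
        |gf c - gf (Function.update c i b)| ≤ 2 := by
      intro c i b
      have : Fin.cons (α := fun _ => Bool) false (Function.update c i b)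
          = Function.update (Fin.cons false c) i.succ b := Fin.cons_update (α := fun _ => Bool) false c i b
      simpa [hgf, this] using hf (Fin.cons false c) i.succ b
    set μt : ℝ := (∑ c', gt c') / 2 ^ n with hμt
    set μf : ℝ := (∑ c', gf c') / 2 ^ n with hμf
    have hμ : (∑ c, f c) / 2 ^ (n+1) = (μt + μf) / 2 := by
      rw [cube_sum_split f, hμt, hμf]
      ring
    have hIt := ih gt L hbt
    have hIf := ih gf L hbf
    -- pointwise difference between gt and gf
    have hpt : ∀ c', |gt c' - gf c'| ≤ 2 := by
      intro c'
      have h0 : Function.update (Fin.cons (α := fun _ => Bool) true c') 0 false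
          = Fin.cons false c' := Fin.update_cons_zero (α := fun _ => Bool) true c' false
      simpa [hgt, hgf, h0] using hf (Fin.cons true c') 0 false
    have hmean : |μt - μf| ≤ 2 := by
      rw [hμt, hμf, div_sub_div_same, ← Finset.sum_sub_distrib]
      rw [abs_div, abs_of_pos (by positivity : (0:ℝ) < 2 ^ n)]
      rw [div_le_iff₀ (by positivity)]
      calc |∑ c', (gt c' - gf c')| ≤ ∑ c', |gt c' - gf c'| := Finset.abs_sum_le_sum_abs _ _
        _ ≤ ∑ _c' : Fin n → Bool, (2:ℝ) := Finset.sum_le_sum (fun c' _ => hpt c')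
        _ = 2 * 2 ^ n := by simp [Finset.card_univ]; ring
    set a : ℝ := (μt - μf) / 2 with ha
    have haa : |a| ≤ 1 := by rw [ha, abs_div]; simp; linarith [hmean, abs_nonneg (μt - μf)]
    have hcosh : Real.exp (L * a) + Real.exp (-(L * a)) ≤ 2 * Real.exp (L ^ 2 / 2) := by
      have h1 : Real.exp (L * a) + Real.exp (-(L * a)) = 2 * Real.cosh (L * a) := by
        rw [Real.cosh_eq]; ring
      rw [h1]
      have h2 : Real.cosh (L * a) ≤ Real.exp ((L * a) ^ 2 / 2) := Real.cosh_le_exp_half_sq _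
      have ha2 : a ^ 2 ≤ 1 := by
        rw [← sq_abs]; nlinarith [abs_nonneg a]
      have h3 : (L * a) ^ 2 ≤ L ^ 2 := by
        nlinarith [sq_nonneg L]
      have h4 : Real.exp ((L * a) ^ 2 / 2) ≤ Real.exp (L ^ 2 / 2) :=
        Real.exp_le_exp.2 (by linarith)
      linarith
    rw [cube_sum_split (fun c => Real.exp (L * (f c - (∑ c, f c) / 2 ^ (n+1))))]
    have hsplit1 : ∀ c', Real.exp (L * (gt c' - (∑ c, f c) / 2 ^ (n+1)))
        = Real.exp (L * (gt c' - μt)) * Real.exp (L * a) := by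
      intro c'
      rw [← Real.exp_add, hμ, ha]
      congr 1; ring
    have hsplit2 : ∀ c', Real.exp (L * (gf c' - (∑ c, f c) / 2 ^ (n+1)))
        = Real.exp (L * (gf c' - μf)) * Real.exp (-(L * a)) := by
      intro c'
      rw [← Real.exp_add, hμ, ha]
      congr 1; ring
    calc (∑ c', Real.exp (L * (gt c' - (∑ c, f c) / 2 ^ (n+1))))
          + ∑ c', Real.exp (L * (gf c' - (∑ c, f c) / 2 ^ (n+1)))
        = (∑ c', Real.exp (L * (gt c' - μt))) * Real.exp (L * a)
          + (∑ c', Real.exp (L * (gf c' - μf))) * Real.exp (-(L * a)) := by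
          rw [Finset.sum_mul, Finset.sum_mul]
          congr 1 <;> exact Finset.sum_congr rfl (fun c' _ => by
            first | exact hsplit1 c' | exact hsplit2 c')
      _ ≤ (2 ^ n * Real.exp (n * L ^ 2 / 2)) * Real.exp (L * a)
          + (2 ^ n * Real.exp (n * L ^ 2 / 2)) * Real.exp (-(L * a)) := by
          gcongr <;> positivity
      _ = (2 ^ n * Real.exp (n * L ^ 2 / 2)) * (Real.exp (L * a) + Real.exp (-(L * a))) := by ring
      _ ≤ (2 ^ n * Real.exp (n * L ^ 2 / 2)) * (2 * Real.exp (L ^ 2 / 2)) :=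
          mul_le_mul_of_nonneg_left hcosh (by positivity)
      _ = 2 ^ (n+1) * (Real.exp (n * L ^ 2 / 2) * Real.exp (L ^ 2 / 2)) := by ring
      _ = 2 ^ (n+1) * Real.exp (((n+1 : ℕ) : ℝ) * L ^ 2 / 2) := by
          have hc : ((n+1 : ℕ) : ℝ) * L ^ 2 / 2 = n * L ^ 2 / 2 + L ^ 2 / 2 := by
            push_cast; ring
          rw [hc, Real.exp_add]

lemma tail_bound (n : ℕ) (hn : 0 < n) (f : (Fin n → Bool) → ℝ)
    (hf : ∀ (c : Fin n → Bool) (i : Fin n) (b : Bool), |f c - f (Function.update c i b)| ≤ 2) :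
    ((univ.filter fun c => Real.sqrt (6 * n) ≤ f c - (∑ c, f c) / 2 ^ n).card : ℝ)
      ≤ 2 ^ n * Real.exp (-3) := by
  set t := Real.sqrt (6 * n) with hts
  have htn : (0:ℝ) < n := by exact_mod_cast hn
  have ht2 : t ^ 2 = 6 * n := Real.sq_sqrt (by positivity)
  have ht : 0 < t := Real.sqrt_pos.2 (by positivity)
  set L := t / n with hL
  have hL0 : 0 < L := by positivity
  have hLt : L * t = 6 := by
    rw [hL]; field_simp; nlinarith [ht2]
  have hnL : (n:ℝ) * L ^ 2 / 2 = 3 := by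
    rw [hL]; field_simp; nlinarith [ht2]
  have key := mgf_bound n f L hf
  set μ := (∑ c, f c) / 2 ^ n with hμ
  have h1 : ((univ.filter fun c => t ≤ f c - μ).card : ℝ) * Real.exp 6
      ≤ ∑ c, Real.exp (L * (f c - μ)) := by
    rw [← hLt]
    calc ((univ.filter fun c => t ≤ f c - μ).card : ℝ) * Real.exp (L * t)
        = ∑ _c ∈ (univ.filter fun c => t ≤ f c - μ), Real.exp (L * t) := by
          rw [Finset.sum_const, nsmul_eq_mul]
      _ ≤ ∑ c ∈ (univ.filter fun c => t ≤ f c - μ), Real.exp (L * (f c - μ)) := by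
          apply Finset.sum_le_sum
          intro c hc
          simp only [mem_filter] at hc
          exact Real.exp_le_exp.2 (mul_le_mul_of_nonneg_left hc.2 hL0.le)
      _ ≤ ∑ c, Real.exp (L * (f c - μ)) :=
          Finset.sum_le_sum_of_subset_of_nonneg (Finset.filter_subset _ _)
            (fun c _ _ => (Real.exp_pos _).le)
  have h2 : ((univ.filter fun c => t ≤ f c - μ).card : ℝ) * Real.exp 6
      ≤ 2 ^ n * Real.exp 3 := by
    calc _ ≤ ∑ c, Real.exp (L * (f c - μ)) := h1
      _ ≤ 2 ^ n * Real.exp ((n:ℝ) * L ^ 2 / 2) := key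
      _ = 2 ^ n * Real.exp 3 := by rw [hnL]
  have h3 : (2:ℝ) ^ n * Real.exp 3 = (2 ^ n * Real.exp (-3)) * Real.exp 6 := by
    rw [mul_assoc, ← Real.exp_add]; norm_num
  rw [h3] at h2
  exact le_of_mul_le_mul_right h2 (Real.exp_pos 6)

theorem stmt5 (n : ℕ) (hn : 0 < n) (w : (Fin n → Bool) → ℝ)
    (hw : ∀ x, 0 ≤ w x) (hsupp : ∃ x, 0 < w x) :
    ((Finset.univ.filter (fun c : Fin n → Bool =>
        wRad w - Real.sqrt (6 * n) ≤ wdelta c w ∧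
        wdelta c w ≤ wRad w + Real.sqrt (6 * n))).card : ℝ) / 2 ^ n
      ≥ 1 - 2 * Real.exp (-3) := by
  set t := Real.sqrt (6 * n) with hts
  set μ := wRad w with hμdef
  have hμ : μ = (∑ c, wdelta c w) / 2 ^ n := by
    rw [hμdef, wRad, Fintype.card_fin]
  have hf : ∀ (c : Fin n → Bool) (i : Fin n) (b : Bool),
      |wdelta c w - wdelta (Function.update c i b) w| ≤ 2 :=
    fun c i b => wdelta_update_abs c w hsupp i b
  -- upper tail
  have hT1 : ((univ.filter fun c => t ≤ wdelta c w - μ).card : ℝ) ≤ 2 ^ n * Real.exp (-3) := by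
    have := tail_bound n hn (fun c => wdelta c w) hf
    rwa [← hμ] at this
  -- lower tail via -wdelta
  have hT2 : ((univ.filter fun c => t ≤ μ - wdelta c w).card : ℝ) ≤ 2 ^ n * Real.exp (-3) := by
    have hg : ∀ (c : Fin n → Bool) (i : Fin n) (b : Bool),
        |(fun c => -wdelta c w) c - (fun c => -wdelta c w) (Function.update c i b)| ≤ 2 := by
      intro c i b
      have h0 := hf c i b
      rw [abs_sub_comm, abs_le] at h0
      rw [abs_le]
      constructor <;> simp <;> linarith [h0.1, h0.2]
    have h := tail_bound n hn (fun c => -wdelta c w) hg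
    have hsum : (∑ c : Fin n → Bool, -wdelta c w) / 2 ^ n = -μ := by
      rw [Finset.sum_neg_distrib, hμ]; ring
    have hset : (univ.filter fun c => t ≤ μ - wdelta c w)
        = (univ.filter fun c : Fin n → Bool =>
            t ≤ (fun c => -wdelta c w) c - (∑ c : Fin n → Bool, -wdelta c w) / 2 ^ n) := by
      apply Finset.filter_congr
      intro c _
      rw [hsum]
      show (t ≤ μ - wdelta c w) ↔ (t ≤ -wdelta c w - -μ)
      constructor <;> intro h' <;> linarith
    rw [hset]
    exact h
  set G := univ.filter (fun c : Fin n → Bool => μ - t ≤ wdelta c w ∧ wdelta c w ≤ μ + t) with hG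
  set B := univ.filter (fun c : Fin n → Bool =>
    ¬(μ - t ≤ wdelta c w ∧ wdelta c w ≤ μ + t)) with hB
  have hGB : G.card + B.card = 2 ^ n := by
    rw [hG, hB, Finset.card_filter_add_card_filter_not, Finset.card_univ]
    simp [Fintype.card_fun]
  have hBsub : B ⊆ (univ.filter fun c => t ≤ wdelta c w - μ)
      ∪ (univ.filter fun c => t ≤ μ - wdelta c w) := by
    intro c hc
    rw [hB, mem_filter] at hc
    rw [not_and_or] at hc
    rcases hc.2 with h' | h'
    · exact Finset.mem_union_right _ (by simp only [mem_filter, mem_univ, true_and]; push_neg at h'; linarith)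
    · exact Finset.mem_union_left _ (by simp only [mem_filter, mem_univ, true_and]; push_neg at h'; linarith)
  have hBcard : (B.card : ℝ) ≤ 2 * (2 ^ n * Real.exp (-3)) := by
    have h1 : B.card ≤ (univ.filter fun c => t ≤ wdelta c w - μ).card
        + (univ.filter fun c => t ≤ μ - wdelta c w).card :=
      le_trans (Finset.card_le_card hBsub) (Finset.card_union_le _ _)
    have h2 : (B.card : ℝ) ≤ ((univ.filter fun c => t ≤ wdelta c w - μ).card : ℝ)
        + ((univ.filter fun c => t ≤ μ - wdelta c w).card : ℝ) := by exact_mod_cast h1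
    linarith
  have hGcard : (G.card : ℝ) = 2 ^ n - B.card := by
    have : (G.card : ℝ) + B.card = 2 ^ n := by exact_mod_cast hGB
    linarith
  rw [ge_iff_le, le_div_iff₀ (by positivity : (0:ℝ) < 2 ^ n)]
  rw [hGcard]
  nlinarith [Real.exp_pos (-3 : ℝ), pow_pos (by norm_num : (0:ℝ) < 2) n]
end

section
/- Let n and k be positive integers and w : {-1,1}^n → [0,∞) a weight function with nonempty support. Let c₁,…,c_k be independent, each uniform on {-1,1}^n, and set δ̄_k(w) = (1/k)·Σ_{i=1}^k δ(c_i, w). Then with probability at least 1 − 2·exp(−3), both δ̄_k(w) − √(6n/k) − n/2 ≤ log₂ Z(w) and log₂ Z(w) ≤ δ̄_k(w) + √(6n/k) + n·log₂(3/2) hold. -/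
open Finset

section interface
variable {ι : Type*} [Fintype ι] [DecidableEq ι] (c : ι → Bool) (w : (ι → Bool) → ℝ)

/-- the support as a Finset -/
noncomputable def wsupp : Finset (ι → Bool) := Finset.univ.filter (fun x => 0 < w x)

lemma mem_wsupp {w : (ι → Bool) → ℝ} {x : ι → Bool} : x ∈ wsupp w ↔ 0 < w x := by
  simp [wsupp]

lemma wsupp_nonempty {w : (ι → Bool) → ℝ} (h : ∃ x, 0 < w x) : (wsupp w).Nonempty := by
  obtain ⟨x, hx⟩ := h; exact ⟨x, mem_wsupp.2 hx⟩

lemma wdelta_eq_sup' {w : (ι → Bool) → ℝ} (h : (wsupp w).Nonempty) :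
    wdelta c w = (wsupp w).sup' h (fun x => ip c x + Real.logb 2 (w x)) := by
  rw [Finset.sup'_eq_csSup_image]
  apply congrArg sSup
  ext y
  constructor
  · rintro ⟨x, hx, rfl⟩
    exact ⟨x, by simpa [mem_wsupp] using hx, rfl⟩
  · rintro ⟨x, hx, rfl⟩
    exact ⟨x, by simpa [mem_wsupp] using hx, rfl⟩

lemma le_wdelta {w : (ι → Bool) → ℝ} {x : ι → Bool} (hx : 0 < w x) :
    ip c x + Real.logb 2 (w x) ≤ wdelta c w := by
  rw [wdelta_eq_sup' c ⟨x, mem_wsupp.2 hx⟩]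
  exact Finset.le_sup' (fun x => ip c x + Real.logb 2 (w x)) (mem_wsupp.2 hx)

lemma wdelta_le {w : (ι → Bool) → ℝ} (h : ∃ x, 0 < w x) {M : ℝ}
    (hM : ∀ x, 0 < w x → ip c x + Real.logb 2 (w x) ≤ M) : wdelta c w ≤ M := by
  rw [wdelta_eq_sup' c (wsupp_nonempty h)]
  exact Finset.sup'_le _ _ (fun x hx => hM x (mem_wsupp.1 hx))

lemma wdelta_exists {w : (ι → Bool) → ℝ} (h : ∃ x, 0 < w x) :
    ∃ x, 0 < w x ∧ wdelta c w = ip c x + Real.logb 2 (w x) := by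
  rw [wdelta_eq_sup' c (wsupp_nonempty h)]
  obtain ⟨x, hx, hx2⟩ := Finset.exists_mem_eq_sup' (wsupp_nonempty h)
    (fun x => ip c x + Real.logb 2 (w x))
  exact ⟨x, mem_wsupp.1 hx, hx2⟩

end interface

section bdd
variable {ι : Type*} [Fintype ι] [DecidableEq ι]

lemma ip_update_sub (c x : ι → Bool) (j : ι) (a b : Bool) :
    ip (Function.update c j a) x - ip (Function.update c j b) x = (sgn a - sgn b) * sgn (x j) := by
  unfold ip
  rw [← Finset.sum_sub_distrib]
  rw [Finset.sum_eq_single j]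
  · simp [sub_mul]
  · intro i _ hij
    simp [Function.update_of_ne hij]
  · simp

lemma abs_sgn (b : Bool) : |sgn b| = 1 := by cases b <;> simp [sgn]

lemma abs_ip_update_sub_le (c x : ι → Bool) (j : ι) (a b : Bool) :
    |ip (Function.update c j a) x - ip (Function.update c j b) x| ≤ 2 := by
  rw [ip_update_sub, abs_mul, abs_sgn, mul_one]
  cases a <;> cases b <;> simp [sgn] <;> norm_num

lemma wdelta_bdd_diff {w : (ι → Bool) → ℝ} (h : ∃ x, 0 < w x) (j : ι) (c : ι → Bool) :
    |wdelta (Function.update c j true) w - wdelta (Function.update c j false) w| ≤ 2 := by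
  have key : ∀ a b : Bool, wdelta (Function.update c j a) w
      ≤ wdelta (Function.update c j b) w + 2 := by
    intro a b
    apply wdelta_le _ h
    intro x hx
    have h1 := le_wdelta (Function.update c j b) hx
    have h2 := abs_ip_update_sub_le c x j a b
    rw [abs_le] at h2
    linarith [h2.2]
  rw [abs_le]
  constructor
  · linarith [key false true]
  · linarith [key true false]

end bdd

section mgf
open Real

lemma two_point_hoeffding {a b D t : ℝ} (h : |a - b| ≤ D) :
    Real.exp (t * a) + Real.exp (t * b) ≤ 2 * Real.exp (t ^ 2 * D ^ 2 / 8 + t * ((a + b) / 2)) := by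
  have e1 : t * a = t * ((a + b) / 2) + t * ((a - b) / 2) := by ring
  have e2 : t * b = t * ((a + b) / 2) + -(t * ((a - b) / 2)) := by ring
  have key : Real.exp (t * a) + Real.exp (t * b)
      = 2 * Real.exp (t * ((a + b) / 2)) * Real.cosh (t * ((a - b) / 2)) := by
    rw [e1, e2, Real.exp_add, Real.exp_add, Real.cosh_eq]; ring
  rw [key]
  have h1 : Real.cosh (t * ((a - b) / 2)) ≤ Real.exp ((t * ((a - b) / 2)) ^ 2 / 2) :=
    Real.cosh_le_exp_half_sq _
  have h2 : (t * ((a - b) / 2)) ^ 2 / 2 ≤ t ^ 2 * D ^ 2 / 8 := by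
    have hab : (a - b) ^ 2 ≤ D ^ 2 := by
      nlinarith [sq_abs (a - b), abs_nonneg (a - b)]
    nlinarith [sq_nonneg t]
  calc 2 * Real.exp (t * ((a + b) / 2)) * Real.cosh (t * ((a - b) / 2))
      ≤ 2 * Real.exp (t * ((a + b) / 2)) * Real.exp (t ^ 2 * D ^ 2 / 8) := by
        apply mul_le_mul_of_nonneg_left _ (by positivity)
        exact h1.trans (Real.exp_le_exp.2 h2)
    _ = 2 * Real.exp (t ^ 2 * D ^ 2 / 8 + t * ((a + b) / 2)) := by
        rw [Real.exp_add]; ring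

lemma sum_cube_cons (m : ℕ) (F : (Fin (m + 1) → Bool) → ℝ) :
    ∑ c : Fin (m + 1) → Bool, F c
      = ∑ c' : Fin m → Bool, (F (Fin.cons true c') + F (Fin.cons false c')) := by
  rw [← (Fin.consEquiv (fun _ : Fin (m+1) => Bool)).sum_comp F, Fintype.sum_prod_type_right]
  apply Finset.sum_congr rfl
  intro y _
  rw [Fintype.sum_bool]
  rfl

/-- McDiarmid-type MGF bound on the Boolean cube, by induction on dimension. -/
lemma mgf_cube (t D : ℝ) :
    ∀ (m : ℕ) (g : (Fin m → Bool) → ℝ),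
    (∀ (j : Fin m) (c : Fin m → Bool),
      |g (Function.update c j true) - g (Function.update c j false)| ≤ D) →
    ∑ c : Fin m → Bool, Real.exp (t * g c)
      ≤ 2 ^ m * Real.exp (t ^ 2 * D ^ 2 * m / 8 + t * ((∑ c : Fin m → Bool, g c) / 2 ^ m) ) := by
  intro m
  induction m with
  | zero =>
    intro g _
    rw [Fintype.sum_unique, Fintype.sum_unique]
    norm_num
  | succ m IH =>
    intro g hg
    set g' : (Fin m → Bool) → ℝ := fun c' => (g (Fin.cons true c') + g (Fin.cons false c')) / 2
      with hg'
    have hbd : ∀ (j : Fin m) (c' : Fin m → Bool),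
        |g' (Function.update c' j true) - g' (Function.update c' j false)| ≤ D := by
      intro j c'
      simp only [hg', Fin.cons_update]
      have h1 := hg j.succ (Fin.cons true c')
      have h2 := hg j.succ (Fin.cons false c')
      rw [abs_le] at h1 h2 ⊢
      constructor
      · linarith [h1.1, h2.1]
      · linarith [h1.2, h2.2]
    have step : ∀ c' : Fin m → Bool,
        Real.exp (t * g (Fin.cons true c')) + Real.exp (t * g (Fin.cons false c'))
          ≤ 2 * Real.exp (t ^ 2 * D ^ 2 / 8 + t * g' c') := by
      intro c'
      have hd : |g (Fin.cons true c') - g (Fin.cons false c')| ≤ D := by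
        have h0 := hg 0 (Fin.cons true c')
        rwa [Fin.update_cons_zero, Fin.update_cons_zero] at h0
      simpa [hg'] using two_point_hoeffding (t := t) hd
    have hsum : (∑ c' : Fin m → Bool, g' c') = (∑ c : Fin (m+1) → Bool, g c) / 2 := by
      rw [sum_cube_cons m g]
      simp only [hg']
      rw [← Finset.sum_div]
    calc ∑ c : Fin (m+1) → Bool, Real.exp (t * g c)
        = ∑ c' : Fin m → Bool,
            (Real.exp (t * g (Fin.cons true c')) + Real.exp (t * g (Fin.cons false c'))) :=
          sum_cube_cons m _
      _ ≤ ∑ c' : Fin m → Bool, 2 * Real.exp (t ^ 2 * D ^ 2 / 8 + t * g' c') :=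
          Finset.sum_le_sum (fun c' _ => step c')
      _ = 2 * Real.exp (t ^ 2 * D ^ 2 / 8) * ∑ c' : Fin m → Bool, Real.exp (t * g' c') := by
          rw [Finset.mul_sum]
          apply Finset.sum_congr rfl
          intro c' _
          rw [Real.exp_add]; ring
      _ ≤ 2 * Real.exp (t ^ 2 * D ^ 2 / 8) *
            (2 ^ m * Real.exp (t ^ 2 * D ^ 2 * m / 8
              + t * ((∑ c' : Fin m → Bool, g' c') / 2 ^ m))) :=
          mul_le_mul_of_nonneg_left (IH g' hbd) (by positivity)
      _ = 2 ^ (m + 1) * Real.exp (t ^ 2 * D ^ 2 * (↑(m + 1)) / 8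
              + t * ((∑ c : Fin (m+1) → Bool, g c) / 2 ^ (m + 1))) := by
          rw [hsum]
          rw [show (2:ℝ) * Real.exp (t ^ 2 * D ^ 2 / 8) *
              (2 ^ m * Real.exp (t ^ 2 * D ^ 2 * m / 8
                + t * ((∑ c : Fin (m+1) → Bool, g c) / 2 / 2 ^ m)))
              = 2 ^ (m + 1) * Real.exp (t ^ 2 * D ^ 2 / 8 + (t ^ 2 * D ^ 2 * m / 8
                + t * ((∑ c : Fin (m+1) → Bool, g c) / 2 / 2 ^ m))) from by
            simp only [Real.exp_add, pow_succ]; ring]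
          congr 1
          push_cast
          rw [pow_succ]
          ring

end mgf

section meanupper
open Real

lemma sum_supp_eq_Zw {ι : Type*} [Fintype ι] [DecidableEq ι] {w : (ι → Bool) → ℝ}
    (hw : ∀ x, 0 ≤ w x) : ∑ x ∈ wsupp w, w x = Zw w := by
  unfold Zw
  apply Finset.sum_subset (Finset.subset_univ _)
  intro x _ hx
  rw [mem_wsupp] at hx
  exact le_antisymm (not_lt.1 hx) (hw x)

lemma Zw_pos {ι : Type*} [Fintype ι] [DecidableEq ι] {w : (ι → Bool) → ℝ}
    (hw : ∀ x, 0 ≤ w x) (hs : ∃ x, 0 < w x) : 0 < Zw w := by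
  obtain ⟨x, hx⟩ := hs
  exact lt_of_lt_of_le hx (Finset.single_le_sum (fun y _ => hw y) (Finset.mem_univ x))

lemma sum_exp_ip (n : ℕ) (x : Fin n → Bool) :
    ∑ c : Fin n → Bool, Real.exp (Real.log 2 * ip c x) = (5 / 2) ^ n := by
  have h1 : ∀ c : Fin n → Bool,
      Real.exp (Real.log 2 * ip c x) = ∏ i, Real.exp (Real.log 2 * (sgn (c i) * sgn (x i))) := by
    intro c
    rw [ip, Finset.mul_sum, Real.exp_sum]
  rw [Finset.sum_congr rfl (fun c _ => h1 c)]
  have hps := Finset.prod_univ_sum (κ := fun _ : Fin n => Bool)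
    (fun _ => (Finset.univ : Finset Bool))
    (fun i b => Real.exp (Real.log 2 * (sgn b * sgn (x i))))
  rw [Fintype.piFinset_univ] at hps
  rw [← hps]
  have e2 : Real.exp (Real.log 2) = 2 := Real.exp_log (by norm_num)
  have h2 : ∀ i : Fin n,
      ∑ b : Bool, Real.exp (Real.log 2 * (sgn b * sgn (x i))) = 5 / 2 := by
    intro i
    have hsgn : sgn (x i) = 1 ∨ sgn (x i) = -1 := by cases x i <;> simp [sgn]
    rcases hsgn with h | h <;> rw [Fintype.sum_bool, h] <;>
      simp [sgn, Real.exp_neg, e2] <;> norm_num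
  rw [Finset.prod_congr rfl (fun i _ => h2 i), Finset.prod_const]
  simp

lemma mean_upper (n : ℕ) (w : (Fin n → Bool) → ℝ) (hw : ∀ x, 0 ≤ w x) (hs : ∃ x, 0 < w x) :
    (∑ c : Fin n → Bool, wdelta c w) / 2 ^ n
      ≤ Real.logb 2 (Zw w) + n * Real.logb 2 (5 / 4) := by
  have hZ := Zw_pos hw hs
  have hcard : (Fintype.card (Fin n → Bool) : ℝ) = 2 ^ n := by
    simp [Fintype.card_fun]
  have key1 : ∀ c : Fin n → Bool, Real.exp (Real.log 2 * wdelta c w)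
      ≤ ∑ x ∈ wsupp w, w x * Real.exp (Real.log 2 * ip c x) := by
    intro c
    obtain ⟨x₀, hx₀, heq⟩ := wdelta_exists c hs
    have e : Real.exp (Real.log 2 * wdelta c w) = w x₀ * Real.exp (Real.log 2 * ip c x₀) := by
      rw [heq, mul_add, Real.exp_add]
      have e1 : Real.log 2 * Real.logb 2 (w x₀) = Real.log (w x₀) := by
        rw [Real.logb]
        field_simp
      rw [e1, Real.exp_log hx₀]
      ring
    rw [e]
    exact Finset.single_le_sum (f := fun x => w x * Real.exp (Real.log 2 * ip c x))
      (fun x hx => mul_nonneg (hw x) (Real.exp_pos _).le) (mem_wsupp.2 hx₀)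
  have key3 : Real.exp (Real.log 2 * ((∑ c : Fin n → Bool, wdelta c w) / 2 ^ n))
      ≤ ∑ c : Fin n → Bool, (1 / 2 ^ n) * Real.exp (Real.log 2 * wdelta c w) := by
    have hgm := Real.geom_mean_le_arith_mean_weighted Finset.univ
      (fun _ : Fin n → Bool => 1 / 2 ^ n) (fun c => Real.exp (Real.log 2 * wdelta c w))
      (fun _ _ => by positivity)
      (by rw [Finset.sum_const, Finset.card_univ, nsmul_eq_mul, hcard]; field_simp)
      (fun _ _ => (Real.exp_pos _).le)
    calc Real.exp (Real.log 2 * ((∑ c : Fin n → Bool, wdelta c w) / 2 ^ n))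
        = ∏ c : Fin n → Bool, Real.exp (Real.log 2 * wdelta c w) ^ ((1:ℝ) / 2 ^ n) := by
          have e : ∀ c : Fin n → Bool, Real.exp (Real.log 2 * wdelta c w) ^ ((1:ℝ) / 2 ^ n)
              = Real.exp (Real.log 2 * wdelta c w * (1 / 2 ^ n)) :=
            fun c => (Real.exp_mul _ _).symm
          rw [Finset.prod_congr rfl (fun c _ => e c), ← Real.exp_sum]
          congr 1
          rw [← Finset.sum_mul, ← Finset.mul_sum]
          ring
      _ ≤ _ := hgm
  have chain : Real.exp (Real.log 2 * ((∑ c : Fin n → Bool, wdelta c w) / 2 ^ n))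
      ≤ Zw w * (5 / 4) ^ n := by
    calc Real.exp (Real.log 2 * ((∑ c : Fin n → Bool, wdelta c w) / 2 ^ n))
        ≤ ∑ c : Fin n → Bool, (1 / 2 ^ n) * Real.exp (Real.log 2 * wdelta c w) := key3
      _ ≤ ∑ c : Fin n → Bool, (1 / 2 ^ n)
            * ∑ x ∈ wsupp w, w x * Real.exp (Real.log 2 * ip c x) :=
          Finset.sum_le_sum (fun c _ =>
            mul_le_mul_of_nonneg_left (key1 c) (by positivity))
      _ = (1 / 2 ^ n) * ∑ x ∈ wsupp w, (w x * (5 / 2) ^ n) := by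
          rw [← Finset.mul_sum]
          congr 1
          rw [Finset.sum_comm]
          apply Finset.sum_congr rfl
          intro x _
          rw [← Finset.mul_sum, sum_exp_ip n x]
      _ = Zw w * (5 / 4) ^ n := by
          rw [← Finset.sum_mul, sum_supp_eq_Zw hw]
          have e : ((5:ℝ) / 4) ^ n = (5 / 2) ^ n / 2 ^ n := by
            rw [← div_pow]
            norm_num
          rw [e]
          ring
  have hln2 : (0:ℝ) < Real.log 2 := Real.log_pos (by norm_num)
  have hlog : Real.log 2 * ((∑ c : Fin n → Bool, wdelta c w) / 2 ^ n)
      ≤ Real.log (Zw w) + n * Real.log (5 / 4) := by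
    have h := (Real.le_log_iff_exp_le (by positivity)).2 chain
    rwa [Real.log_mul (ne_of_gt hZ) (by positivity), Real.log_pow] at h
  have h2 : (∑ c : Fin n → Bool, wdelta c w) / 2 ^ n
      ≤ (Real.log (Zw w) + n * Real.log (5 / 4)) / Real.log 2 := by
    rw [le_div_iff₀ hln2, mul_comm]
    exact hlog
  calc (∑ c : Fin n → Bool, wdelta c w) / 2 ^ n
      ≤ (Real.log (Zw w) + n * Real.log (5 / 4)) / Real.log 2 := h2
    _ = Real.logb 2 (Zw w) + n * Real.logb 2 (5 / 4) := by
        rw [Real.logb, Real.logb]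
        ring

lemma logb_five_fourth : Real.logb 2 (5 / 4) ≤ 1 / 2 := by
  rw [Real.logb, div_le_iff₀ (Real.log_pos (by norm_num))]
  have h : (2:ℝ) * Real.log (5 / 4) = Real.log ((5 / 4) ^ (2:ℕ)) := by
    rw [Real.log_pow]; norm_num
  have h2 : Real.log ((5 / 4) ^ (2:ℕ)) ≤ Real.log 2 := by
    apply Real.log_le_log (by norm_num)
    norm_num
  nlinarith [h, h2]

end meanupper

section meanlower
open Real

lemma sgn_true : sgn true = 1 := rfl
lemma sgn_false : sgn false = -1 := rfl

lemma ip_cons {n : ℕ} (e : Bool) (c' : Fin n → Bool) (s : Bool) (x' : Fin n → Bool) :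
    ip (Fin.cons e c') (Fin.cons s x') = sgn e * sgn s + ip c' x' := by
  unfold ip
  rw [Fin.sum_univ_succ]
  simp [Fin.cons_zero, Fin.cons_succ]

lemma wdelta_cons_both {n : ℕ} (e : Bool) (c' : Fin n → Bool)
    {w : (Fin (n + 1) → Bool) → ℝ}
    (hT : ∃ x', 0 < w (Fin.cons true x')) (hF : ∃ x', 0 < w (Fin.cons false x')) :
    wdelta (Fin.cons e c') w
      = max (sgn e + wdelta c' (fun x' => w (Fin.cons true x')))
          (-(sgn e) + wdelta c' (fun x' => w (Fin.cons false x'))) := by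
  have hs : ∃ x, 0 < w x := by obtain ⟨x', hx'⟩ := hT; exact ⟨_, hx'⟩
  apply le_antisymm
  · apply wdelta_le _ hs
    intro x hx
    have hxe : x = Fin.cons (x 0) (Fin.tail x) := (Fin.cons_self_tail x).symm
    rcases h0 : x 0 with _ | _
    · -- x 0 = false
      rw [hxe, h0] at hx ⊢
      rw [ip_cons, sgn_false]
      have := le_wdelta (w := fun x' => w (Fin.cons false x')) c' (x := Fin.tail x) hx
      have h2 : sgn e * (-1) + (ip c' (Fin.tail x)
          + Real.logb 2 (w (Fin.cons false (Fin.tail x))))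
          ≤ -(sgn e) + wdelta c' (fun x' => w (Fin.cons false x')) := by linarith
      calc sgn e * (-1) + ip c' (Fin.tail x) + Real.logb 2 (w (Fin.cons false (Fin.tail x)))
          ≤ -(sgn e) + wdelta c' (fun x' => w (Fin.cons false x')) := by linarith
        _ ≤ _ := le_max_right _ _
    · rw [hxe, h0] at hx ⊢
      rw [ip_cons, sgn_true]
      have := le_wdelta (w := fun x' => w (Fin.cons true x')) c' (x := Fin.tail x) hx
      calc sgn e * 1 + ip c' (Fin.tail x) + Real.logb 2 (w (Fin.cons true (Fin.tail x)))
          ≤ sgn e + wdelta c' (fun x' => w (Fin.cons true x')) := by linarith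
        _ ≤ _ := le_max_left _ _
  · apply max_le
    · obtain ⟨x'₀, hx'₀, heq⟩ := wdelta_exists c' hT
      rw [heq]
      have := le_wdelta (Fin.cons e c') (w := w) (x := Fin.cons true x'₀) hx'₀
      rw [ip_cons, sgn_true] at this
      linarith
    · obtain ⟨x'₀, hx'₀, heq⟩ := wdelta_exists c' hF
      rw [heq]
      have := le_wdelta (Fin.cons e c') (w := w) (x := Fin.cons false x'₀) hx'₀
      rw [ip_cons, sgn_false] at this
      linarith

lemma wdelta_cons_single {n : ℕ} (e : Bool) (c' : Fin n → Bool)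
    {w : (Fin (n + 1) → Bool) → ℝ} (b : Bool)
    (hb : ∃ x', 0 < w (Fin.cons b x')) (hnb : ∀ x', ¬ 0 < w (Fin.cons (!b) x')) :
    wdelta (Fin.cons e c') w = sgn e * sgn b + wdelta c' (fun x' => w (Fin.cons b x')) := by
  have hs : ∃ x, 0 < w x := by obtain ⟨x', hx'⟩ := hb; exact ⟨_, hx'⟩
  apply le_antisymm
  · apply wdelta_le _ hs
    intro x hx
    have hxe : x = Fin.cons (x 0) (Fin.tail x) := (Fin.cons_self_tail x).symm
    have hx0 : x 0 = b := by
      by_contra hne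
      have hx0' : x 0 = !b := by
        revert hne
        cases b <;> cases x 0 <;> simp
      rw [hxe, hx0'] at hx
      exact hnb _ hx
    rw [hxe, hx0] at hx ⊢
    rw [ip_cons]
    have := le_wdelta (w := fun x' => w (Fin.cons b x')) c' (x := Fin.tail x) hx
    linarith
  · obtain ⟨x'₀, hx'₀, heq⟩ := wdelta_exists c' hb
    rw [heq]
    have := le_wdelta (Fin.cons e c') (w := w) (x := Fin.cons b x'₀) hx'₀
    rw [ip_cons] at this
    linarith

lemma Zw_cons {n : ℕ} (w : (Fin (n + 1) → Bool) → ℝ) :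
    Zw w = Zw (fun x' => w (Fin.cons true x')) + Zw (fun x' => w (Fin.cons false x')) := by
  unfold Zw
  rw [sum_cube_cons n w, Finset.sum_add_distrib]

lemma Zw_zero_of_no_pos {ι : Type*} [Fintype ι] [DecidableEq ι] {w : (ι → Bool) → ℝ}
    (hw : ∀ x, 0 ≤ w x) (h : ∀ x, ¬ 0 < w x) : Zw w = 0 :=
  Finset.sum_eq_zero (fun x _ => le_antisymm (not_lt.1 (h x)) (hw x))

end meanlower

section mainlower
open Real

lemma mean_lower : ∀ (n : ℕ) (w : (Fin n → Bool) → ℝ), (∀ x, 0 ≤ w x) → (∃ x, 0 < w x) →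
    2 ^ n * (Real.logb 2 (Zw w) - n * Real.logb 2 (3 / 2)) ≤ ∑ c : Fin n → Bool, wdelta c w := by
  intro n
  induction n with
  | zero =>
    intro w hw hs
    obtain ⟨x₀, hx₀⟩ := hs
    have hu : ∀ x : Fin 0 → Bool, x = x₀ := fun x => Subsingleton.elim _ _
    have huniv : (Finset.univ : Finset (Fin 0 → Bool)) = {x₀} :=
      Finset.eq_singleton_iff_unique_mem.2 ⟨Finset.mem_univ _, fun x _ => hu x⟩
    have hZ : Zw w = w x₀ := by unfold Zw; rw [huniv, Finset.sum_singleton]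
    have hsum : ∑ c : Fin 0 → Bool, wdelta c w = wdelta x₀ w := by
      rw [huniv, Finset.sum_singleton]
    obtain ⟨x, hx, heq⟩ := wdelta_exists x₀ ⟨x₀, hx₀⟩
    rw [hu x] at heq
    have hip : ip x₀ x₀ = 0 := by unfold ip; simp
    rw [hsum, heq, hip, hZ]
    norm_num
  | succ n IH =>
    intro w hw hs
    set β := Real.logb 2 (3 / 2) with hβdef
    have hβ : 0 ≤ β := Real.logb_nonneg (by norm_num) (by norm_num)
    set wT : (Fin n → Bool) → ℝ := fun x' => w (Fin.cons true x') with hwT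
    set wF : (Fin n → Bool) → ℝ := fun x' => w (Fin.cons false x') with hwF
    have hwT' : ∀ x', 0 ≤ wT x' := fun x' => hw _
    have hwF' : ∀ x', 0 ≤ wF x' := fun x' => hw _
    have hZdec : Zw w = Zw wT + Zw wF := Zw_cons w
    have hP : (0:ℝ) < 2 ^ n := by positivity
    by_cases hT : ∃ x', 0 < wT x'
    · by_cases hF : ∃ x', 0 < wF x'
      · -- both sides have support
        have hA := IH wT hwT' hT
        have hB := IH wF hwF' hF
        have hZT := Zw_pos hwT' hT
        have hZF := Zw_pos hwF' hF
        have hsum : ∑ c : Fin (n+1) → Bool, wdelta c w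
            = ∑ c' : Fin n → Bool, (max (1 + wdelta c' wT) (-1 + wdelta c' wF)
                + max (-1 + wdelta c' wT) (1 + wdelta c' wF)) := by
          rw [sum_cube_cons]
          apply Finset.sum_congr rfl
          intro c' _
          rw [wdelta_cons_both true c' hT hF, wdelta_cons_both false c' hT hF,
            sgn_true, sgn_false]
          norm_num
          rfl
        have S1 : 2 * ∑ c' : Fin n → Bool, wdelta c' wT
            ≤ ∑ c : Fin (n+1) → Bool, wdelta c w := by
          rw [hsum, Finset.mul_sum]
          apply Finset.sum_le_sum
          intro c' _
          have m1 := le_max_left (1 + wdelta c' wT) (-1 + wdelta c' wF)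
          have m2 := le_max_left (-1 + wdelta c' wT) (1 + wdelta c' wF)
          linarith
        have S2 : 2 * ∑ c' : Fin n → Bool, wdelta c' wF
            ≤ ∑ c : Fin (n+1) → Bool, wdelta c w := by
          rw [hsum, Finset.mul_sum]
          apply Finset.sum_le_sum
          intro c' _
          have m1 := le_max_right (1 + wdelta c' wT) (-1 + wdelta c' wF)
          have m2 := le_max_right (-1 + wdelta c' wT) (1 + wdelta c' wF)
          linarith
        have S3 : (∑ c' : Fin n → Bool, wdelta c' wT) + (∑ c' : Fin n → Bool, wdelta c' wF)
              + 2 * 2 ^ n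
            ≤ ∑ c : Fin (n+1) → Bool, wdelta c w := by
          rw [hsum]
          have e : ∑ c' : Fin n → Bool, (wdelta c' wT + wdelta c' wF + 2)
              = (∑ c' : Fin n → Bool, wdelta c' wT) + (∑ c' : Fin n → Bool, wdelta c' wF)
                + 2 * 2 ^ n := by
            rw [Finset.sum_add_distrib, Finset.sum_add_distrib, Finset.sum_const,
              Finset.card_univ]
            simp [Fintype.card_fun]
            push_cast
            ring
          rw [← e]
          apply Finset.sum_le_sum
          intro c' _
          have m1 := le_max_left (1 + wdelta c' wT) (-1 + wdelta c' wF)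
          have m2 := le_max_right (-1 + wdelta c' wT) (1 + wdelta c' wF)
          linarith
        rcases le_or_gt (Zw wF) (Zw wT / 2) with hc1 | hc1
        · have hlog : Real.logb 2 (Zw w) ≤ β + Real.logb 2 (Zw wT) := by
            rw [hZdec]
            calc Real.logb 2 (Zw wT + Zw wF) ≤ Real.logb 2 ((3/2) * Zw wT) :=
                Real.logb_le_logb_of_le (by norm_num) (by linarith) (by linarith)
              _ = β + Real.logb 2 (Zw wT) := by
                  rw [Real.logb_mul (by norm_num) (ne_of_gt hZT), hβdef]
          have hscal : Real.logb 2 (Zw w) - (↑(n+1)) * β ≤ Real.logb 2 (Zw wT) - ↑n * β := by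
            push_cast
            have : (↑n + 1) * β = ↑n * β + β := by ring
            linarith [this]
          calc (2:ℝ) ^ (n+1) * (Real.logb 2 (Zw w) - (↑(n+1)) * β)
              ≤ 2 ^ (n+1) * (Real.logb 2 (Zw wT) - ↑n * β) :=
                mul_le_mul_of_nonneg_left hscal (by positivity)
            _ = 2 * (2 ^ n * (Real.logb 2 (Zw wT) - ↑n * β)) := by rw [pow_succ]; ring
            _ ≤ 2 * ∑ c' : Fin n → Bool, wdelta c' wT := by linarith
            _ ≤ _ := S1
        · rcases le_or_gt (Zw wT) (Zw wF / 2) with hc2 | hc2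
          · have hlog : Real.logb 2 (Zw w) ≤ β + Real.logb 2 (Zw wF) := by
              rw [hZdec]
              calc Real.logb 2 (Zw wT + Zw wF) ≤ Real.logb 2 ((3/2) * Zw wF) :=
                  Real.logb_le_logb_of_le (by norm_num) (by linarith) (by linarith)
                _ = β + Real.logb 2 (Zw wF) := by
                    rw [Real.logb_mul (by norm_num) (ne_of_gt hZF), hβdef]
            have hscal : Real.logb 2 (Zw w) - (↑(n+1)) * β ≤ Real.logb 2 (Zw wF) - ↑n * β := by
              push_cast
              have : (↑n + 1) * β = ↑n * β + β := by ring
              linarith [this]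
            calc (2:ℝ) ^ (n+1) * (Real.logb 2 (Zw w) - (↑(n+1)) * β)
                ≤ 2 ^ (n+1) * (Real.logb 2 (Zw wF) - ↑n * β) :=
                  mul_le_mul_of_nonneg_left hscal (by positivity)
              _ = 2 * (2 ^ n * (Real.logb 2 (Zw wF) - ↑n * β)) := by rw [pow_succ]; ring
              _ ≤ 2 * ∑ c' : Fin n → Bool, wdelta c' wF := by linarith
              _ ≤ _ := S2
          · -- balanced case
            have hZsq : (Zw wT + Zw wF) ^ 2 ≤ 9 * (Zw wT * Zw wF) := by
              nlinarith [hZT, hZF, hc1, hc2]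
            have h9 : Real.logb 2 ((Zw wT + Zw wF) ^ 2) ≤ Real.logb 2 (9 * (Zw wT * Zw wF)) :=
              Real.logb_le_logb_of_le (by norm_num) (by positivity) hZsq
            rw [Real.logb_pow] at h9
            have h9b : Real.logb 2 (9 * (Zw wT * Zw wF))
                = Real.logb 2 9 + Real.logb 2 (Zw wT) + Real.logb 2 (Zw wF) := by
              rw [Real.logb_mul (by norm_num) (by positivity),
                Real.logb_mul (ne_of_gt hZT) (ne_of_gt hZF)]
              ring
            have h99 : Real.logb 2 9 = 2 * β + 2 := by
              have e9 : (9:ℝ) = (3/2) ^ (2:ℕ) * 2 ^ (2:ℕ) := by norm_num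
              rw [e9, Real.logb_mul (by norm_num) (by norm_num), Real.logb_pow,
                Real.logb_pow, Real.logb_self_eq_one (by norm_num), hβdef]
              ring
            have hlog : 2 * Real.logb 2 (Zw w)
                ≤ 2 * β + 2 + Real.logb 2 (Zw wT) + Real.logb 2 (Zw wF) := by
              rw [hZdec]
              push_cast at h9
              linarith [h9, h9b, h99]
            have hscal : 2 * (Real.logb 2 (Zw w) - (↑(n+1)) * β)
                ≤ (Real.logb 2 (Zw wT) - ↑n * β) + (Real.logb 2 (Zw wF) - ↑n * β) + 2 := by
              push_cast
              have : 2 * ((↑n + 1) * β) = 2 * (↑n * β) + 2 * β := by ring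
              linarith [this]
            calc (2:ℝ) ^ (n+1) * (Real.logb 2 (Zw w) - (↑(n+1)) * β)
                = 2 ^ n * (2 * (Real.logb 2 (Zw w) - (↑(n+1)) * β)) := by rw [pow_succ]; ring
              _ ≤ 2 ^ n * ((Real.logb 2 (Zw wT) - ↑n * β) + (Real.logb 2 (Zw wF) - ↑n * β) + 2) :=
                  mul_le_mul_of_nonneg_left hscal hP.le
              _ = 2 ^ n * (Real.logb 2 (Zw wT) - ↑n * β)
                  + 2 ^ n * (Real.logb 2 (Zw wF) - ↑n * β) + 2 * 2 ^ n := by ring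
              _ ≤ (∑ c' : Fin n → Bool, wdelta c' wT) + (∑ c' : Fin n → Bool, wdelta c' wF)
                  + 2 * 2 ^ n := by linarith
              _ ≤ _ := S3
      · -- F side empty
        have hnF : ∀ x', ¬ 0 < wF x' := fun x' hx => hF ⟨x', hx⟩
        have hZF0 : Zw wF = 0 := Zw_zero_of_no_pos hwF' hnF
        have hA := IH wT hwT' hT
        have hsum : ∑ c : Fin (n+1) → Bool, wdelta c w
            = ∑ c' : Fin n → Bool, (2 * wdelta c' wT) := by
          rw [sum_cube_cons]
          apply Finset.sum_congr rfl
          intro c' _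
          have hnb : ∀ x', ¬ 0 < w (Fin.cons (!true) x') := by
            intro x'
            simp only [Bool.not_true]
            exact hnF x'
          rw [wdelta_cons_single true c' true hT hnb, wdelta_cons_single false c' true hT hnb,
            sgn_true, sgn_false]
          ring
        have hscal : Real.logb 2 (Zw w) - (↑(n+1)) * β ≤ Real.logb 2 (Zw wT) - ↑n * β := by
          rw [hZdec, hZF0, add_zero]
          push_cast
          have : (↑n + 1) * β = ↑n * β + β := by ring
          linarith [this]
        calc (2:ℝ) ^ (n+1) * (Real.logb 2 (Zw w) - (↑(n+1)) * β)
            ≤ 2 ^ (n+1) * (Real.logb 2 (Zw wT) - ↑n * β) :=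
              mul_le_mul_of_nonneg_left hscal (by positivity)
          _ = 2 * (2 ^ n * (Real.logb 2 (Zw wT) - ↑n * β)) := by rw [pow_succ]; ring
          _ ≤ 2 * ∑ c' : Fin n → Bool, wdelta c' wT := by linarith
          _ = ∑ c : Fin (n+1) → Bool, wdelta c w := by rw [hsum, Finset.mul_sum]
    · -- T side empty
      have hnT : ∀ x', ¬ 0 < wT x' := fun x' hx => hT ⟨x', hx⟩
      have hZT0 : Zw wT = 0 := Zw_zero_of_no_pos hwT' hnT
      have hF : ∃ x', 0 < wF x' := by
        obtain ⟨x, hx⟩ := hs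
        have hxe : x = Fin.cons (x 0) (Fin.tail x) := (Fin.cons_self_tail x).symm
        rcases h0 : x 0 with _ | _
        · refine ⟨Fin.tail x, ?_⟩
          rw [hxe, h0] at hx
          exact hx
        · exfalso
          apply hnT (Fin.tail x)
          rw [hxe, h0] at hx
          exact hx
      have hA := IH wF hwF' hF
      have hsum : ∑ c : Fin (n+1) → Bool, wdelta c w
          = ∑ c' : Fin n → Bool, (2 * wdelta c' wF) := by
        rw [sum_cube_cons]
        apply Finset.sum_congr rfl
        intro c' _
        have hnb : ∀ x', ¬ 0 < w (Fin.cons (!false) x') := by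
          intro x'
          simp only [Bool.not_false]
          exact hnT x'
        rw [wdelta_cons_single true c' false hF hnb, wdelta_cons_single false c' false hF hnb,
          sgn_true, sgn_false]
        ring
      have hscal : Real.logb 2 (Zw w) - (↑(n+1)) * β ≤ Real.logb 2 (Zw wF) - ↑n * β := by
        rw [hZdec, hZT0, zero_add]
        push_cast
        have : (↑n + 1) * β = ↑n * β + β := by ring
        linarith [this]
      calc (2:ℝ) ^ (n+1) * (Real.logb 2 (Zw w) - (↑(n+1)) * β)
          ≤ 2 ^ (n+1) * (Real.logb 2 (Zw wF) - ↑n * β) :=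
            mul_le_mul_of_nonneg_left hscal (by positivity)
        _ = 2 * (2 ^ n * (Real.logb 2 (Zw wF) - ↑n * β)) := by rw [pow_succ]; ring
        _ ≤ 2 * ∑ c' : Fin n → Bool, wdelta c' wF := by linarith
        _ = ∑ c : Fin (n+1) → Bool, wdelta c w := by rw [hsum, Finset.mul_sum]

end mainlower

section assembly
open Real

lemma tensor_mgf (n k : ℕ) (w : (Fin n → Bool) → ℝ) (s : ℝ) :
    ∑ c : Fin k → Fin n → Bool, Real.exp (s * ∑ i, wdelta (c i) w)
      = (∑ c0 : Fin n → Bool, Real.exp (s * wdelta c0 w)) ^ k := by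
  have hps := Finset.prod_univ_sum (κ := fun _ : Fin k => (Fin n → Bool))
    (fun _ => Finset.univ) (fun i c0 => Real.exp (s * wdelta c0 w))
  rw [Fintype.piFinset_univ] at hps
  calc ∑ c : Fin k → Fin n → Bool, Real.exp (s * ∑ i, wdelta (c i) w)
      = ∑ c : Fin k → Fin n → Bool, ∏ i, Real.exp (s * wdelta (c i) w) := by
        apply Finset.sum_congr rfl
        intro c _
        rw [Finset.mul_sum, Real.exp_sum]
    _ = ∏ _i : Fin k, ∑ c0 : Fin n → Bool, Real.exp (s * wdelta c0 w) := hps.symm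
    _ = (∑ c0 : Fin n → Bool, Real.exp (s * wdelta c0 w)) ^ k := by
        rw [Finset.prod_const, Finset.card_univ, Fintype.card_fin]

lemma chernoff_count {α : Type*} [Fintype α] (S : α → ℝ) (θ s : ℝ)
    (p : α → Prop) [DecidablePred p] (hp : ∀ a, p a → s * θ ≤ s * S a) :
    ((Finset.univ.filter p).card : ℝ) * Real.exp (s * θ) ≤ ∑ a : α, Real.exp (s * S a) := by
  calc ((Finset.univ.filter p).card : ℝ) * Real.exp (s * θ)
      = ∑ _a ∈ Finset.univ.filter p, Real.exp (s * θ) := by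
        rw [Finset.sum_const, nsmul_eq_mul]
    _ ≤ ∑ a ∈ Finset.univ.filter p, Real.exp (s * S a) :=
        Finset.sum_le_sum (fun a ha => Real.exp_le_exp.2 (hp a (Finset.mem_filter.1 ha).2))
    _ ≤ ∑ a : α, Real.exp (s * S a) :=
        Finset.sum_le_sum_of_subset_of_nonneg (Finset.filter_subset _ _)
          (fun a _ _ => (Real.exp_pos _).le)

end assembly


theorem stmt6 (n k : ℕ) (hn : 0 < n) (hk : 0 < k) (w : (Fin n → Bool) → ℝ)
    (hw : ∀ x, 0 ≤ w x) (hsupp : ∃ x, 0 < w x) :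
    ((Finset.univ.filter (fun c : Fin k → Fin n → Bool =>
        (∑ i, wdelta (c i) w) / k - Real.sqrt (6 * n / k) - n / 2 ≤ Real.logb 2 (Zw w) ∧
        Real.logb 2 (Zw w) ≤ (∑ i, wdelta (c i) w) / k + Real.sqrt (6 * n / k)
          + n * Real.logb 2 (3 / 2))).card : ℝ) / 2 ^ (n * k)
      ≥ 1 - 2 * Real.exp (-3) := by

  classical
  have hnR : (0:ℝ) < n := by exact_mod_cast hn
  have hkR : (0:ℝ) < k := by exact_mod_cast hk
  set t : ℝ := Real.sqrt (6 * n / k) with htdef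
  have ht2 : t ^ 2 = 6 * n / k := Real.sq_sqrt (by positivity)
  set lam : ℝ := t / n with hlamdef
  set μ : ℝ := (∑ c0 : Fin n → Bool, wdelta c0 w) / 2 ^ n with hμdef
  set Sf : (Fin k → Fin n → Bool) → ℝ := fun c => ∑ i, wdelta (c i) w with hSfdef
  have hbdd : ∀ (j : Fin n) (c : Fin n → Bool),
      |wdelta (Function.update c j true) w - wdelta (Function.update c j false) w| ≤ 2 :=
    fun j c => wdelta_bdd_diff hsupp j c
  -- single-block and k-block MGF bounds
  have mgfk : ∀ s : ℝ, ∑ c : Fin k → Fin n → Bool, Real.exp (s * Sf c)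
      ≤ 2 ^ (n * k) * Real.exp (k * (s ^ 2 * 2 ^ 2 * n / 8 + s * μ)) := by
    intro s
    have h1 := mgf_cube s 2 n (fun c => wdelta c w) hbdd
    rw [tensor_mgf n k w s]
    calc (∑ c0 : Fin n → Bool, Real.exp (s * wdelta c0 w)) ^ k
        ≤ (2 ^ n * Real.exp (s ^ 2 * 2 ^ 2 * n / 8 + s * μ)) ^ k := by
          apply pow_le_pow_left₀ (Finset.sum_nonneg (fun c0 _ => (Real.exp_pos _).le))
          exact h1
      _ = 2 ^ (n * k) * Real.exp (k * (s ^ 2 * 2 ^ 2 * n / 8 + s * μ)) := by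
          rw [mul_pow, ← pow_mul, ← Real.exp_nat_mul]
  -- mean bounds
  have hmuU : μ ≤ Real.logb 2 (Zw w) + n / 2 := by
    have h1 := mean_upper n w hw hsupp
    have h2 := logb_five_fourth
    have h3 : (0:ℝ) ≤ n := hnR.le
    rw [hμdef]
    nlinarith [h1, h2, h3]
  have hmuL : Real.logb 2 (Zw w) - n * Real.logb 2 (3 / 2) ≤ μ := by
    have h := mean_lower n w hw hsupp
    have h2 : (∑ c0 : Fin n → Bool, wdelta c0 w) = μ * 2 ^ n := by
      rw [hμdef]; field_simp
    rw [h2] at h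
    have hp : (0:ℝ) < 2 ^ n := by positivity
    nlinarith [h, hp]
  have htpos : 0 < t := Real.sqrt_pos.2 (by positivity)
  have hlamnn : 0 ≤ lam := by positivity
  -- upper-tail count
  have hU : ((Finset.univ.filter (fun c : Fin k → Fin n → Bool => k * (μ + t) ≤ Sf c)).card : ℝ)
      ≤ 2 ^ (n * k) * Real.exp (-3) := by
    have hcc := chernoff_count Sf (k * (μ + t)) lam _
      (fun a ha => mul_le_mul_of_nonneg_left ha hlamnn)
    have h1 := hcc.trans (mgfk lam)
    have h2 := mul_le_mul_of_nonneg_right h1 (Real.exp_pos (-(lam * (k * (μ + t))))).le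
    rw [mul_assoc, ← Real.exp_add, add_neg_cancel, Real.exp_zero, mul_one, mul_assoc,
      ← Real.exp_add] at h2
    have hE : (k:ℝ) * (lam ^ 2 * 2 ^ 2 * n / 8 + lam * μ) + -(lam * (k * (μ + t))) = -3 := by
      rw [hlamdef]
      have hn0 : (n:ℝ) ≠ 0 := ne_of_gt hnR
      have hk0 : (k:ℝ) ≠ 0 := ne_of_gt hkR
      have step : (k:ℝ) * ((t/n) ^ 2 * 2 ^ 2 * n / 8 + (t/n) * μ) + -((t/n) * (k * (μ + t)))
          = -(k * t ^ 2 / (2 * n)) := by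
        field_simp
        ring
      rw [step, ht2]
      field_simp
      ring
    rw [hE] at h2
    exact h2
  -- lower-tail count
  have hL : ((Finset.univ.filter (fun c : Fin k → Fin n → Bool => Sf c ≤ k * (μ - t))).card : ℝ)
      ≤ 2 ^ (n * k) * Real.exp (-3) := by
    have hcc := chernoff_count Sf (k * (μ - t)) (-lam) _
      (fun a ha => mul_le_mul_of_nonpos_left ha (neg_nonpos.2 hlamnn))
    have h1 := hcc.trans (mgfk (-lam))
    have h2 := mul_le_mul_of_nonneg_right h1 (Real.exp_pos (-(-lam * (k * (μ - t))))).le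
    rw [mul_assoc, ← Real.exp_add, add_neg_cancel, Real.exp_zero, mul_one, mul_assoc,
      ← Real.exp_add] at h2
    have hE : (k:ℝ) * ((-lam) ^ 2 * 2 ^ 2 * n / 8 + -lam * μ) + -(-lam * (k * (μ - t))) = -3 := by
      rw [hlamdef]
      have hn0 : (n:ℝ) ≠ 0 := ne_of_gt hnR
      have hk0 : (k:ℝ) ≠ 0 := ne_of_gt hkR
      have step : (k:ℝ) * ((-(t/n)) ^ 2 * 2 ^ 2 * n / 8 + -(t/n) * μ) + -(-(t/n) * (k * (μ - t)))
          = -(k * t ^ 2 / (2 * n)) := by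
        field_simp
        ring
      rw [step, ht2]
      field_simp
      ring
    rw [hE] at h2
    exact h2
  -- covering
  set G := Finset.univ.filter (fun c : Fin k → Fin n → Bool =>
      (∑ i, wdelta (c i) w) / k - Real.sqrt (6 * n / k) - n / 2 ≤ Real.logb 2 (Zw w) ∧
      Real.logb 2 (Zw w) ≤ (∑ i, wdelta (c i) w) / k + Real.sqrt (6 * n / k)
        + n * Real.logb 2 (3 / 2)) with hGdef
  set U := Finset.univ.filter (fun c : Fin k → Fin n → Bool => k * (μ + t) ≤ Sf c) with hUdef
  set L := Finset.univ.filter (fun c : Fin k → Fin n → Bool => Sf c ≤ k * (μ - t)) with hLdef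
  have hcover : Finset.univ \ G ⊆ U ∪ L := by
    intro c hc
    rw [Finset.mem_sdiff, hGdef, Finset.mem_filter] at hc
    have hng : ¬ ((∑ i, wdelta (c i) w) / k - Real.sqrt (6 * n / k) - n / 2
          ≤ Real.logb 2 (Zw w) ∧
        Real.logb 2 (Zw w) ≤ (∑ i, wdelta (c i) w) / k + Real.sqrt (6 * n / k)
          + n * Real.logb 2 (3 / 2)) := fun hgood => hc.2 ⟨Finset.mem_univ c, hgood⟩
    rw [not_and_or] at hng
    rw [Finset.mem_union, hUdef, hLdef, Finset.mem_filter, Finset.mem_filter]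
    rcases hng with h | h
    · left
      refine ⟨Finset.mem_univ c, ?_⟩
      push_neg at h
      rw [← htdef] at h
      have hd : μ + t ≤ Sf c / k := by
        rw [hSfdef]
        simp only
        linarith [hmuU]
      calc (k:ℝ) * (μ + t) ≤ k * (Sf c / k) := mul_le_mul_of_nonneg_left hd hkR.le
        _ = Sf c := by field_simp
    · right
      refine ⟨Finset.mem_univ c, ?_⟩
      push_neg at h
      rw [← htdef] at h
      have hd : Sf c / k ≤ μ - t := by
        rw [hSfdef]
        simp only
        linarith [hmuL]
      calc Sf c = k * (Sf c / k) := by field_simp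
        _ ≤ k * (μ - t) := mul_le_mul_of_nonneg_left hd hkR.le
  have hcardN : (Finset.univ : Finset (Fin k → Fin n → Bool)).card ≤ G.card + (U.card + L.card) := by
    have h1 : (Finset.univ \ G).card = Finset.univ.card - G.card :=
      Finset.card_sdiff_of_subset (Finset.filter_subset _ _)
    have h2 : (Finset.univ \ G).card ≤ U.card + L.card :=
      le_trans (Finset.card_le_card hcover) (Finset.card_union_le _ _)
    have h3 : G.card ≤ Finset.univ.card := Finset.card_le_card (Finset.filter_subset _ _)
    omega
  have hcardR : ((2:ℝ) ^ (n * k)) ≤ G.card + (U.card + L.card) := by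
    have e : ((Finset.univ : Finset (Fin k → Fin n → Bool)).card : ℝ) = 2 ^ (n * k) := by
      rw [Finset.card_univ]
      simp [Fintype.card_fun]
      rw [← pow_mul]
    rw [← e]
    exact_mod_cast hcardN
  have hpow : (0:ℝ) < 2 ^ (n * k) := by positivity
  rw [ge_iff_le, le_div_iff₀ hpow]
  linarith [hU, hL, hcardR]
end

section
/- Let j ≥ 1 be an integer and w : {-1,1}^j → [0,∞) a weight function. Define w⁺(x) = w(x,1) and w⁻(x) = w(x,−1) on {-1,1}^{j−1}, and suppose both w⁺ and w⁻ have nonempty support. Then (R(w⁻) + R(w⁺))/2 ≤ R(w) − 1. -/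
open Finset

lemma sgn_mul_self (b : Bool) : sgn b * sgn b = 1 := by cases b <;> simp [sgn]

lemma ip_snoc {m : ℕ} (c x : Fin m → Bool) (s : Bool) :
    ip (Fin.snoc c s) (Fin.snoc x s) = ip c x + 1 := by
  unfold ip
  rw [Fin.sum_univ_castSucc]
  simp [Fin.snoc_castSucc, Fin.snoc_last, sgn_mul_self]

lemma wdelta_bddAbove {ι : Type*} [Fintype ι] [DecidableEq ι] (c : ι → Bool)
    (w : (ι → Bool) → ℝ) :
    BddAbove {y : ℝ | ∃ x, 0 < w x ∧ y = ip c x + Real.logb 2 (w x)} := by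
  apply Set.Finite.bddAbove
  apply Set.Finite.subset (Set.finite_range fun x => ip c x + Real.logb 2 (w x))
  rintro y ⟨x, _, rfl⟩; exact ⟨x, rfl⟩

lemma wdelta_snoc_le {m : ℕ} (c : Fin m → Bool) (s : Bool) (w : (Fin (m + 1) → Bool) → ℝ)
    (hsupp : ∃ x : Fin m → Bool, 0 < w (Fin.snoc x s)) :
    wdelta c (fun x => w (Fin.snoc x s)) + 1 ≤ wdelta (Fin.snoc c s) w := by
  obtain ⟨x0, hx0⟩ := hsupp
  have h : wdelta c (fun x => w (Fin.snoc x s)) ≤ wdelta (Fin.snoc c s) w - 1 := by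
    unfold wdelta
    refine csSup_le ⟨ip c x0 + Real.logb 2 (w (Fin.snoc x0 s)), x0, hx0, rfl⟩ ?_
    rintro y ⟨x, hx, rfl⟩
    have hmem : ip c x + Real.logb 2 (w (Fin.snoc x s)) + 1 ∈
        {y : ℝ | ∃ z, 0 < w z ∧ y = ip (Fin.snoc c s) z + Real.logb 2 (w z)} := by
      exact ⟨Fin.snoc x s, hx, by rw [ip_snoc]; ring⟩
    have := le_csSup (wdelta_bddAbove (Fin.snoc c s) w) hmem
    rw [le_sub_iff_add_le]
    simpa [wdelta] using this
  linarith

def snocEquiv (m : ℕ) : ((Fin m → Bool) × Bool) ≃ (Fin (m + 1) → Bool) where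
  toFun p := Fin.snoc p.1 p.2
  invFun f := (fun i => f i.castSucc, f (Fin.last m))
  left_inv := by rintro ⟨x, b⟩; simp
  right_inv f := by
    simp only []
    exact Fin.snoc_init_self f

theorem stmt11 (m : ℕ) (w : (Fin (m + 1) → Bool) → ℝ)
    (hw : ∀ x, 0 ≤ w x)
    (hsuppP : ∃ x : Fin m → Bool, 0 < w (Fin.snoc x true))
    (hsuppM : ∃ x : Fin m → Bool, 0 < w (Fin.snoc x false)) :
    (wRad (fun x : Fin m → Bool => w (Fin.snoc x false)) +
       wRad (fun x : Fin m → Bool => w (Fin.snoc x true))) / 2 ≤ wRad w - 1 := by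
  have hsum : ∑ c : Fin (m + 1) → Bool, wdelta c w =
      ∑ c : Fin m → Bool, (wdelta (Fin.snoc c false) w + wdelta (Fin.snoc c true) w) := by
    rw [← Fintype.sum_equiv (snocEquiv m) _ (fun c => wdelta c w) (fun _ => rfl)]
    rw [Fintype.sum_prod_type]
    simp [snocEquiv, Bool.apply_cond (fun b => wdelta (Fin.snoc _ b) w), add_comm]
  have hge : ∑ c : Fin m → Bool, (wdelta c (fun x => w (Fin.snoc x false)) + 1 +
      (wdelta c (fun x => w (Fin.snoc x true)) + 1)) ≤
      ∑ c : Fin (m + 1) → Bool, wdelta c w := by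
    rw [hsum]
    apply Finset.sum_le_sum
    intro c _
    have h1 := wdelta_snoc_le c false w hsuppM
    have h2 := wdelta_snoc_le c true w hsuppP
    linarith
  have hcard : (Fintype.card (Fin m → Bool)) = 2 ^ m := by simp
  rw [Finset.sum_add_distrib, Finset.sum_add_distrib, Finset.sum_add_distrib] at hge
  simp only [Finset.sum_const, Finset.card_univ, hcard, nsmul_eq_mul, mul_one] at hge
  unfold wRad
  simp only [Fintype.card_fin]
  rw [div_sub' (by positivity), ← add_div, div_div, div_le_div_iff₀ (by positivity) (by positivity)]
  have h2 : (2:ℝ) ^ (m + 1) = 2 ^ m * 2 := by ring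
  push_cast at hge
  rw [h2]
  nlinarith [mul_le_mul_of_nonneg_right hge (by positivity : (0:ℝ) ≤ 2 ^ m * 2)]
end
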